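/- Let ρ be an ordinal metric on a set X of ordinals, let F be a nonempty finite subset of X, and let k ≥ ρ^F, where ρ^F = max{ρ(α,β) : α,β ∈ F} is the diameter of F. Then the k-closure of F, (F)_k = {α ∈ X : ∃β ∈ F, α ≤ β and ρ(α,β) ≤ k}, equals {α ∈ X : α ≤ max(F) and ρ(α, max(F)) ≤ k}. -/
import Mathlib


def IsOrdinalMetric (X : Set Ordinal) (ρ : Ordinal → Ordinal → ℕ) : Prop :=
  (∀ α ∈ X, ∀ β ∈ X, (ρ α β = 0 ↔ α = β)) ∧
  (∀ α ∈ X, ∀ β ∈ X, ρ α β = ρ β α) ∧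
  (∀ α ∈ X, ∀ β ∈ X, ∀ γ ∈ X, α ≤ β → α ≤ γ → ρ α β ≤ max (ρ α γ) (ρ β γ)) ∧
  (∀ β ∈ X, ∀ k : ℕ, {α | α ∈ X ∧ α ≤ β ∧ ρ α β ≤ k}.Finite)

/-- The `k`-closure `(F)_k = {α ∈ X : ∃ β ∈ F, α ≤ β ∧ ρ(α,β) ≤ k}`. -/
def kClosure (X : Set Ordinal) (ρ : Ordinal → Ordinal → ℕ) (F : Finset Ordinal) (k : ℕ) :
    Set Ordinal :=
  {α | α ∈ X ∧ ∃ β ∈ F, α ≤ β ∧ ρ α β ≤ k}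

/-- The diameter `ρ^F = max {ρ(α,β) : α, β ∈ F}`. -/
def diam (ρ : Ordinal → Ordinal → ℕ) (F : Finset Ordinal) : ℕ :=
  F.sup fun α => F.sup fun β => ρ α β

/-- For `k ≥ ρ^F`, the `k`-closure of `F` equals
`{α ∈ X : α ≤ max F ∧ ρ(α, max F) ≤ k}`. -/
theorem kClosure_eq_ball_of_max (X : Set Ordinal) (ρ : Ordinal → Ordinal → ℕ)
    (h : IsOrdinalMetric X ρ) (F : Finset Ordinal) (hne : F.Nonempty)
    (hFX : ↑F ⊆ X) (k : ℕ) (hk : diam ρ F ≤ k) :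
    kClosure X ρ F k = {α | α ∈ X ∧ α ≤ F.max' hne ∧ ρ α (F.max' hne) ≤ k} := by
  obtain ⟨-, -, htri, -⟩ := h
  have hM : F.max' hne ∈ F := F.max'_mem hne
  ext α
  constructor
  · rintro ⟨hαX, β, hβF, hαβ, hρ⟩
    have hβM : ρ (F.max' hne) β ≤ k := by
      refine le_trans ?_ hk
      exact le_trans (Finset.le_sup (f := fun β => ρ (F.max' hne) β) hβF)
        (Finset.le_sup (f := fun α => F.sup fun β => ρ α β) hM)
    have hαM : α ≤ F.max' hne := le_trans hαβ (F.le_max' β hβF)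
    refine ⟨hαX, hαM, ?_⟩
    have := htri α hαX (F.max' hne) (hFX hM) β (hFX hβF) hαM hαβ
    exact le_trans this (max_le hρ hβM)
  · rintro ⟨hαX, hαM, hρ⟩
    exact ⟨hαX, F.max' hne, hM, hαM, hρ⟩
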